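/- Let X = (X_{ij}) be an M_{p,q}(ℝ)-valued random variable with square-integrable entries whose distribution is invariant under left multiplication by every orthogonal matrix in O(p). Then for all row indices j, l ∈ {1,…,p} and column indices i, k ∈ {1,…,q}, E(X_{ji} X_{lk}) = δ_{jl} · E(X_{1i} X_{1k}); in particular entries from different rows are uncorrelated and all rows have the same second-moment matrix. -/

import Mathlib

open Matrix MeasureTheory
open scoped ProbabilityTheory

/-- Matrices carry the product measurable structure of their entries. -/
instance {m n : Type*} : MeasurableSpace (Matrix m n ℝ) := MeasurableSpace.pi

section aux

variable {p q : ℕ}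

lemma measurable_entry (a : Fin p) (b : Fin q) :
    Measurable fun M : Matrix (Fin p) (Fin q) ℝ => M a b :=
  (measurable_pi_apply b).comp (measurable_pi_apply a)

lemma measurable_matmul (A : Matrix (Fin p) (Fin p) ℝ) {Ω : Type*} [MeasurableSpace Ω]
    {X : Ω → Matrix (Fin p) (Fin q) ℝ} (hX : Measurable X) :
    Measurable fun ω => A * X ω := by
  apply measurable_pi_lambda
  intro r
  apply measurable_pi_lambda
  intro c
  have : (fun ω => (A * X ω) r c) = fun ω => ∑ s, A r s * X ω s c := by
    funext ω; simp [Matrix.mul_apply]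
  rw [this]
  exact Finset.measurable_sum _ fun s _ =>
    (measurable_const.mul (((measurable_entry s c)).comp hX))

/-- Key invariance consequence: integrals of entry products are preserved. -/
lemma integral_entry_prod_invariant {Ω : Type*} [MeasureSpace Ω]
    (X : Ω → Matrix (Fin p) (Fin q) ℝ) (hX : Measurable X)
    {A : Matrix (Fin p) (Fin p) ℝ} (hA : A ∈ Matrix.orthogonalGroup (Fin p) ℝ)
    (hinv : ∀ A : Matrix (Fin p) (Fin p) ℝ, A ∈ Matrix.orthogonalGroup (Fin p) ℝ →
      Measure.map (fun ω => A * X ω) (ℙ : Measure Ω) = Measure.map X (ℙ : Measure Ω))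
    (a b : Fin p) (i k : Fin q) :
    ∫ ω, (A * X ω) a i * (A * X ω) b k = ∫ ω, X ω a i * X ω b k := by
  have hf : Measurable fun M : Matrix (Fin p) (Fin q) ℝ => M a i * M b k :=
    (measurable_entry a i).mul (measurable_entry b k)
  have h1 : ∫ ω, (A * X ω) a i * (A * X ω) b k
      = ∫ M, M a i * M b k ∂(Measure.map (fun ω => A * X ω) (ℙ : Measure Ω)) := by
    rw [integral_map (measurable_matmul A hX).aemeasurable hf.aestronglyMeasurable]
  have h2 : ∫ M, M a i * M b k ∂(Measure.map X (ℙ : Measure Ω))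
      = ∫ ω, X ω a i * X ω b k := by
    rw [integral_map hX.aemeasurable hf.aestronglyMeasurable]
  rw [h1, hinv A hA, h2]

end aux

/-- If the distribution of an `M_{p,q}(ℝ)`-valued random variable `X` with
square-integrable entries is invariant under left multiplication by `O(p)`,
then `E(X_{ji} X_{lk}) = δ_{jl} E(X_{1i} X_{1k})`. -/
theorem radial_second_moments {p q : ℕ} (hp : 0 < p) {Ω : Type*} [MeasureSpace Ω]
    (hprob : IsProbabilityMeasure (ℙ : Measure Ω))
    (X : Ω → Matrix (Fin p) (Fin q) ℝ) (hX : Measurable X)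
    (hL2 : ∀ j i, MemLp (fun ω => X ω j i) 2 ℙ)
    (hinv : ∀ A : Matrix (Fin p) (Fin p) ℝ, A ∈ Matrix.orthogonalGroup (Fin p) ℝ →
      Measure.map (fun ω => A * X ω) (ℙ : Measure Ω) = Measure.map X (ℙ : Measure Ω)) :
    ∀ (j l : Fin p) (i k : Fin q),
      ∫ ω, X ω j i * X ω l k =
        (if j = l then 1 else 0) * ∫ ω, X ω ⟨0, hp⟩ i * X ω ⟨0, hp⟩ k := by
  intro j l i k
  by_cases hjl : j = l
  · subst hjl
    rw [if_pos rfl, one_mul]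
    -- use the permutation matrix swapping j and 0
    set z : Fin p := ⟨0, hp⟩
    set σ : Equiv.Perm (Fin p) := Equiv.swap j z with hσ
    set A : Matrix (Fin p) (Fin p) ℝ :=
      Matrix.of (fun r s => if σ r = s then (1 : ℝ) else 0) with hA
    have hAentry : ∀ r s, A r s = if σ r = s then (1 : ℝ) else 0 := fun r s => rfl
    have hAmul : ∀ (M : Matrix (Fin p) (Fin q) ℝ) r c, (A * M) r c = M (σ r) c := by
      intro M r c
      simp only [Matrix.mul_apply, hAentry]
      rw [Finset.sum_eq_single (σ r)]
      · simp
      · intro s _ hs; simp [Ne.symm hs]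
      · intro h; exact absurd (Finset.mem_univ _) h
    have hAorth : A ∈ Matrix.orthogonalGroup (Fin p) ℝ := by
      rw [Matrix.mem_orthogonalGroup_iff]
      ext r s
      simp only [Matrix.mul_apply, Matrix.star_apply, star_trivial, hAentry,
        Matrix.one_apply]
      rw [Finset.sum_eq_single (σ r)]
      · by_cases h : r = s
        · simp [h, hAentry]
        · have : σ r ≠ σ s := fun hc => h (σ.injective hc)
          simp [this, Ne.symm this, h, Ne.symm h, hAentry]
      · intro t _ ht; simp [Ne.symm ht]
      · intro h; exact absurd (Finset.mem_univ _) h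
    have key := integral_entry_prod_invariant X hX hAorth hinv z z i k
    have hσz : σ z = j := Equiv.swap_apply_right j z
    calc ∫ ω, X ω j i * X ω j k
        = ∫ ω, (A * X ω) z i * (A * X ω) z k := by
          congr 1; funext ω; rw [hAmul, hAmul, hσz]
      _ = ∫ ω, X ω z i * X ω z k := key
  · simp only [if_neg hjl, zero_mul]
    -- use the diagonal sign flip matrix negating row j
    set d : Fin p → ℝ := fun r => if r = j then -1 else 1 with hd
    set A : Matrix (Fin p) (Fin p) ℝ := Matrix.diagonal d with hA
    have hAmul : ∀ (M : Matrix (Fin p) (Fin q) ℝ) r c, (A * M) r c = d r * M r c := by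
      intro M r c
      rw [hA, Matrix.diagonal_mul]
    have hAorth : A ∈ Matrix.orthogonalGroup (Fin p) ℝ := by
      rw [Matrix.mem_orthogonalGroup_iff]
      have : star A = A := by
        rw [hA]
        ext r s
        simp only [Matrix.star_apply, star_trivial]
        by_cases h : r = s
        · subst h; rfl
        · rw [Matrix.diagonal_apply_ne _ h, Matrix.diagonal_apply_ne _ (Ne.symm h)]
      rw [hA, Matrix.diagonal_transpose, Matrix.diagonal_mul_diagonal]
      ext r s
      by_cases h : r = s
      · subst h
        rw [Matrix.diagonal_apply_eq, Matrix.one_apply_eq]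
        by_cases hr : r = j <;> simp [hd, hr]
      · rw [Matrix.diagonal_apply_ne _ h, Matrix.one_apply_ne h]
    have key := integral_entry_prod_invariant X hX hAorth hinv j l i k
    have hdj : d j = -1 := by simp [hd]
    have hdl : d l = 1 := by simp [hd, Ne.symm hjl]
    have heq : (fun ω => (A * X ω) j i * (A * X ω) l k)
        = fun ω => -(X ω j i * X ω l k) := by
      funext ω
      rw [hAmul, hAmul, hdj, hdl]; ring
    rw [heq] at key
    rw [integral_neg] at key
    linarith
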